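/- Let H be a family of measurable sets in a probability space (Ω,π) with VC-dimension at most k, such that π(A △ B) ≥ ε for all distinct A, B ∈ H, where 0 < ε < 1. Then |H| ≤ (80k)^{10k} · ε^{−20k}. -/

import Mathlib

open MeasureTheory

/-- A finite set `S` is shattered by a family `H` of subsets of `V`. -/
def SetShatters {V : Type*} (H : Set (Set V)) (S : Finset V) : Prop :=
  ∀ X : Set V, X ⊆ ↑S → ∃ Y ∈ H, X = Y ∩ ↑S

open Finset in
open scoped Classical in
/-- Averaging: some point lies in an `ε` fraction of the sets. -/
lemma exists_rich_point {Ω : Type*} [MeasurableSpace Ω] (π : Measure Ω)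
    [IsProbabilityMeasure π] {ι : Type*} (P : Finset ι) (D : ι → Set Ω)
    (hm : ∀ p ∈ P, MeasurableSet (D p)) {ε : ℝ} (hε0 : 0 < ε)
    (hε : ∀ p ∈ P, ε ≤ (π (D p)).toReal) (hP : P.Nonempty) :
    ∃ x : Ω, ε * P.card ≤ ((P.filter fun p => x ∈ D p).card : ℝ) := by
  by_contra hcon
  push_neg at hcon
  set c : ℝ := ε * P.card with hc
  have hcpos : 0 < c := mul_pos hε0 (by exact_mod_cast card_pos.2 hP)
  set f : Ω → ℝ := fun x => ((P.filter fun p => x ∈ D p).card : ℝ) with hf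
  have hf_eq : f = fun x => ∑ p ∈ P, (D p).indicator (fun _ => (1:ℝ)) x := by
    funext x
    simp only [hf, card_filter]
    push_cast
    refine Finset.sum_congr rfl fun p hp => ?_
    by_cases h : x ∈ D p <;> simp [Set.indicator, h]
  have hint : ∀ p ∈ P, Integrable ((D p).indicator (fun _ => (1:ℝ))) π :=
    fun p hp => (integrable_const (1:ℝ)).indicator (hm p hp)
  have hfint : Integrable f π := by
    rw [hf_eq]; exact integrable_finset_sum P hint
  have hI : ∫ x, f x ∂π = ∑ p ∈ P, (π (D p)).toReal := by
    rw [hf_eq, integral_finset_sum P hint]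
    exact Finset.sum_congr rfl fun p hp => by
      simpa [measureReal_def] using integral_indicator_const (1:ℝ) (hm p hp)
  have h1 : c ≤ ∫ x, f x ∂π := by
    rw [hI, hc]
    calc ε * P.card = ∑ _p ∈ P, ε := by rw [Finset.sum_const]; ring
      _ ≤ ∑ p ∈ P, (π (D p)).toReal := Finset.sum_le_sum hε
  have hceil1 : 1 ≤ ⌈c⌉₊ := Nat.one_le_iff_ne_zero.2 (by
    simpa using (Nat.ceil_pos.2 hcpos).ne')
  have h2 : ∀ x, f x ≤ (⌈c⌉₊ : ℝ) - 1 := by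
    intro x
    have hlt : (P.filter fun p => x ∈ D p).card < ⌈c⌉₊ := Nat.lt_ceil.2 (hcon x)
    have h3 : (P.filter fun p => x ∈ D p).card ≤ ⌈c⌉₊ - 1 := Nat.le_sub_one_of_lt hlt
    have h4 : (f x) ≤ ((⌈c⌉₊ - 1 : ℕ) : ℝ) := by
      simp only [hf]; exact_mod_cast h3
    calc f x ≤ ((⌈c⌉₊ - 1 : ℕ) : ℝ) := h4
      _ = (⌈c⌉₊ : ℝ) - 1 := by
          rw [Nat.cast_sub hceil1]; norm_num
  have h5 : ∫ x, f x ∂π ≤ (⌈c⌉₊ : ℝ) - 1 := by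
    calc ∫ x, f x ∂π ≤ ∫ _x, ((⌈c⌉₊ : ℝ) - 1) ∂π :=
          integral_mono hfint (integrable_const _) h2
      _ = (⌈c⌉₊ : ℝ) - 1 := by simp
  have h6 : (⌈c⌉₊ : ℝ) - 1 < c := by
    have := Nat.ceil_lt_add_one hcpos.le
    linarith
  linarith

open Finset in
/-- Greedy construction of a small transversal. -/
lemma exists_transversal {Ω : Type*} [MeasurableSpace Ω] (π : Measure Ω)
    [IsProbabilityMeasure π] {ι : Type*} (D : ι → Set Ω) {ε : ℝ} (hε0 : 0 < ε)
    (hε1 : ε < 1) :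
    ∀ m : ℕ, ∀ P : Finset ι,
      (∀ p ∈ P, MeasurableSet (D p) ∧ ε ≤ (π (D p)).toReal) →
      (P.card : ℝ) * (1 - ε) ^ m < 1 →
      ∃ T : Finset Ω, T.card ≤ m ∧ ∀ p ∈ P, ∃ x ∈ T, x ∈ D p := by
  classical
  intro m
  induction m with
  | zero =>
    intro P hP hcard
    rw [pow_zero, mul_one] at hcard
    have : P.card = 0 := by exact_mod_cast Nat.lt_one_iff.1 (by exact_mod_cast hcard)
    refine ⟨∅, le_refl 0, ?_⟩
    simp [card_eq_zero.1 this]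
  | succ m ih =>
    intro P hP hcard
    rcases P.eq_empty_or_nonempty with rfl | hne
    · exact ⟨∅, by simp, by simp⟩
    obtain ⟨x, hx⟩ := exists_rich_point π P D (fun p hp => (hP p hp).1) hε0
      (fun p hp => (hP p hp).2) hne
    set P' := P.filter fun p => x ∉ D p with hP'
    have hsplit : (P.filter fun p => x ∈ D p).card + P'.card = P.card := by
      simpa [hP'] using card_filter_add_card_filter_not
        (s := P) (p := fun p => x ∈ D p)
    have hP'card : (P'.card : ℝ) ≤ P.card * (1 - ε) := by
      have h1 : (P'.card : ℝ) = (P.card : ℝ) - (P.filter fun p => x ∈ D p).card := by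
        have := congrArg (fun n : ℕ => (n : ℝ)) hsplit
        push_cast at this
        linarith
      rw [h1]; nlinarith [hx]
    have h1ε : (0:ℝ) ≤ 1 - ε := by linarith
    have hlt : (P'.card : ℝ) * (1 - ε) ^ m < 1 := by
      calc (P'.card : ℝ) * (1 - ε) ^ m
          ≤ ((P.card : ℝ) * (1 - ε)) * (1 - ε) ^ m :=
            mul_le_mul_of_nonneg_right hP'card (pow_nonneg h1ε m)
        _ = (P.card : ℝ) * (1 - ε) ^ (m + 1) := by ring
        _ < 1 := hcard
    obtain ⟨T, hTc, hT⟩ := ih P' (fun p hp => hP p (filter_subset _ _ hp)) hlt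
    refine ⟨insert x T, (card_insert_le _ _).trans (Nat.succ_le_succ hTc), ?_⟩
    intro p hp
    by_cases hxp : x ∈ D p
    · exact ⟨x, mem_insert_self _ _, hxp⟩
    · obtain ⟨y, hy, hyp⟩ := hT p (mem_filter.2 ⟨hp, hxp⟩)
      exact ⟨y, mem_insert_of_mem hy, hyp⟩

open Finset in
open scoped Classical in
/-- Sauer–Shelah style bound for a family separated by a finite transversal. -/
lemma card_le_of_separating {Ω : Type*} (H : Finset (Set Ω)) (k : ℕ)
    (hvc : ∀ S : Finset Ω, SetShatters (↑H : Set (Set Ω)) S → S.card ≤ k)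
    (T : Finset Ω)
    (hT : ∀ A ∈ H, ∀ B ∈ H, A ≠ B → ∃ x ∈ T, x ∈ symmDiff A B) :
    H.card ≤ (k + 1) * (T.card + 1) ^ k := by
  set tr : Set Ω → Finset Ω := fun Y => T.filter (· ∈ Y) with htr
  have hinj : Set.InjOn tr ↑H := by
    intro A hA B hB hAB
    by_contra hne
    obtain ⟨x, hxT, hxD⟩ := hT A hA B hB hne
    rw [Set.mem_symmDiff] at hxD
    rcases hxD with ⟨hxA, hxB⟩ | ⟨hxB, hxA⟩
    · have h1 : x ∈ tr A := mem_filter.2 ⟨hxT, hxA⟩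
      exact hxB (mem_filter.1 (hAB ▸ h1)).2
    · have h1 : x ∈ tr B := mem_filter.2 ⟨hxT, hxB⟩
      exact hxA (mem_filter.1 (hAB ▸ h1)).2
  set 𝒜 := H.image tr with h𝒜
  have hcard : H.card = 𝒜.card := (card_image_of_injOn hinj).symm
  have hsub : 𝒜.shatterer ⊆ T.powerset.filter fun s => s.card ≤ k := by
    intro S hS
    rw [mem_shatterer] at hS
    have hST : S ⊆ T := by
      obtain ⟨u, hu, hSu⟩ := hS.exists_superset
      obtain ⟨Y, _hY, rfl⟩ := mem_image.1 hu
      exact hSu.trans (filter_subset _ _)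
    have hshat : SetShatters (↑H : Set (Set Ω)) S := by
      intro X hX
      obtain ⟨u, hu, hSu⟩ := hS (filter_subset (· ∈ X) S)
      obtain ⟨Y, hY, rfl⟩ := mem_image.1 hu
      refine ⟨Y, hY, ?_⟩
      ext x
      have hx : x ∈ S ∩ tr Y ↔ x ∈ S.filter (· ∈ X) := by rw [hSu]
      simp only [htr, mem_inter, mem_filter] at hx
      simp only [Set.mem_inter_iff, Finset.mem_coe]
      constructor
      · intro hxX
        have hxS : x ∈ S := hX hxX
        obtain ⟨-, -, hxY⟩ := hx.2 ⟨hxS, hxX⟩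
        exact ⟨hxY, hxS⟩
      · rintro ⟨hxY, hxS⟩
        exact (hx.1 ⟨hxS, hST hxS, hxY⟩).2
    exact mem_filter.2 ⟨mem_powerset.2 hST, hvc S hshat⟩
  have h1 : 𝒜.card ≤ 𝒜.shatterer.card := card_le_card_shatterer 𝒜
  have h2 : (T.powerset.filter fun s => s.card ≤ k).card ≤ (k + 1) * (T.card + 1) ^ k := by
    have hsub2 : (T.powerset.filter fun s => s.card ≤ k) ⊆
        (range (k + 1)).biUnion fun i => T.powersetCard i := by
      intro s hs
      rw [mem_filter, mem_powerset] at hs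
      exact mem_biUnion.2 ⟨s.card, mem_range.2 (Nat.lt_succ_of_le hs.2),
        mem_powersetCard.2 ⟨hs.1, rfl⟩⟩
    calc (T.powerset.filter fun s => s.card ≤ k).card
        ≤ ((range (k + 1)).biUnion fun i => T.powersetCard i).card := card_le_card hsub2
      _ ≤ ∑ i ∈ range (k + 1), (T.powersetCard i).card := card_biUnion_le
      _ ≤ ∑ _i ∈ range (k + 1), (T.card + 1) ^ k := by
          refine Finset.sum_le_sum fun i hi => ?_
          rw [card_powersetCard]
          calc T.card.choose i ≤ T.card ^ i := Nat.choose_le_pow _ _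
            _ ≤ (T.card + 1) ^ i := Nat.pow_le_pow_left (Nat.le_succ _) i
            _ ≤ (T.card + 1) ^ k :=
                Nat.pow_le_pow_right (Nat.succ_pos _) (Nat.lt_succ_iff.1 (mem_range.1 hi))
      _ = (k + 1) * (T.card + 1) ^ k := by rw [sum_const, card_range, smul_eq_mul]
  calc H.card = 𝒜.card := hcard
    _ ≤ 𝒜.shatterer.card := h1
    _ ≤ (T.powerset.filter fun s => s.card ≤ k).card := card_le_card hsub
    _ ≤ (k + 1) * (T.card + 1) ^ k := h2

set_option maxHeartbeats 1000000

/-- A family `H` of measurable sets in a probability space with VC-dimension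
at most `k` whose members are pairwise at symmetric-difference measure at
least `ε` satisfies `|H| ≤ (80k)^{10k} ε^{−20k}`. -/
theorem card_le_of_vc_dim_and_packing
    {Ω : Type*} [MeasurableSpace Ω] (π : Measure Ω) [IsProbabilityMeasure π]
    (H : Finset (Set Ω)) (hmeas : ∀ A ∈ H, MeasurableSet A)
    (k : ℕ) (hvc : ∀ S : Finset Ω, SetShatters (↑H : Set (Set Ω)) S → S.card ≤ k)
    (ε : ℝ) (hε0 : 0 < ε) (hε1 : ε < 1)
    (hsep : ∀ A ∈ H, ∀ B ∈ H, A ≠ B → ε ≤ (π (symmDiff A B)).toReal) :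
    (H.card : ℝ) ≤ (80 * k : ℝ) ^ (10 * k) / ε ^ (20 * k) := by
  classical
  have hRHS1 : (1 : ℝ) ≤ (80 * k : ℝ) ^ (10 * k) / ε ^ (20 * k) := by
    rw [le_div_iff₀ (pow_pos hε0 _), one_mul]
    calc ε ^ (20 * k) ≤ 1 := pow_le_one₀ hε0.le hε1.le
      _ ≤ (80 * k : ℝ) ^ (10 * k) := by
        rcases Nat.eq_zero_or_pos k with rfl | hk
        · simp
        · refine one_le_pow₀ ?_
          have : (1 : ℝ) ≤ (k : ℕ) := by exact_mod_cast hk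
          nlinarith
  by_cases hN2 : H.card ≤ 1
  · calc (H.card : ℝ) ≤ 1 := by exact_mod_cast hN2
      _ ≤ _ := hRHS1
  push_neg at hN2
  have hNR : (2 : ℝ) ≤ (H.card : ℝ) := by exact_mod_cast hN2
  set r : ℝ := (H.card : ℝ) with hr
  have hr0 : (0 : ℝ) < r := by linarith
  set L := Real.log r with hL
  have hL0 : 0 < L := Real.log_pos (by linarith)
  set c := 2 * L / ε with hc
  have hc0 : 0 < c := by positivity
  set m := ⌈c⌉₊ with hm
  have hm1 : 1 ≤ m := Nat.one_le_iff_ne_zero.2 (Nat.ceil_pos.2 hc0).ne'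
  have hmc : c ≤ (m : ℝ) := Nat.le_ceil c
  set P := (H ×ˢ H).filter (fun p => p.1 ≠ p.2) with hPdef
  have hPprop : ∀ p ∈ P, MeasurableSet (symmDiff p.1 p.2) ∧
      ε ≤ (π (symmDiff p.1 p.2)).toReal := by
    intro p hp
    rw [hPdef, Finset.mem_filter, Finset.mem_product] at hp
    obtain ⟨⟨h1, h2⟩, h3⟩ := hp
    exact ⟨(hmeas _ h1).symmDiff (hmeas _ h2), hsep _ h1 _ h2 h3⟩
  have hPcard : (P.card : ℝ) ≤ r ^ 2 := by
    have h : P.card ≤ H.card * H.card := by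
      calc P.card ≤ (H ×ˢ H).card := Finset.card_filter_le _ _
        _ = H.card * H.card := Finset.card_product _ _
    calc (P.card : ℝ) ≤ ((H.card * H.card : ℕ) : ℝ) := by exact_mod_cast h
      _ = r ^ 2 := by push_cast [hr]; ring
  have hkey : (P.card : ℝ) * (1 - ε) ^ m < 1 := by
    have h1 : (1 - ε : ℝ) < Real.exp (-ε) := by
      have := Real.add_one_lt_exp (x := -ε) (by linarith)
      linarith
    have h2 : (1 - ε : ℝ) ^ m < Real.exp (-ε) ^ m :=
      pow_lt_pow_left₀ h1 (by linarith) (by omega)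
    have h3 : Real.exp (-ε) ^ m = Real.exp (-(ε * m)) := by
      rw [← Real.exp_nat_mul]; ring_nf
    have h4 : Real.exp (-(ε * m)) ≤ Real.exp (-(2 * L)) := by
      apply Real.exp_le_exp.2
      have h5 : 2 * L ≤ ε * m := by
        have h6 : 2 * L = ε * c := by rw [hc]; field_simp
        nlinarith
      linarith
    have h5 : Real.exp (-(2 * L)) = (r ^ 2)⁻¹ := by
      rw [Real.exp_neg]
      congr 1
      rw [show (2 * L) = L + L by ring, Real.exp_add, hL, Real.exp_log hr0]
      ring
    have hr2 : (0 : ℝ) < r ^ 2 := by positivity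
    calc (P.card : ℝ) * (1 - ε) ^ m
        ≤ r ^ 2 * (1 - ε) ^ m :=
          mul_le_mul_of_nonneg_right hPcard (pow_nonneg (by linarith) _)
      _ < r ^ 2 * (r ^ 2)⁻¹ := by
          refine mul_lt_mul_of_pos_left ?_ hr2
          rw [← h5]
          exact lt_of_lt_of_le (h3 ▸ h2) h4
      _ = 1 := mul_inv_cancel₀ hr2.ne'
  obtain ⟨T, hTm, hTcov⟩ := exists_transversal π
    (fun p : Set Ω × Set Ω => symmDiff p.1 p.2) hε0 hε1 m P hPprop hkey
  have hTsep : ∀ A ∈ H, ∀ B ∈ H, A ≠ B → ∃ x ∈ T, x ∈ symmDiff A B := by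
    intro A hA B hB hAB
    exact hTcov (A, B)
      (by rw [hPdef]; exact Finset.mem_filter.2 ⟨Finset.mem_product.2 ⟨hA, hB⟩, hAB⟩)
  have hsauer : H.card ≤ (k + 1) * (T.card + 1) ^ k := card_le_of_separating H k hvc T hTsep
  rcases Nat.eq_zero_or_pos k with rfl | hk1
  · simp at hsauer; omega
  have hkR : (1 : ℝ) ≤ (k : ℝ) := by exact_mod_cast hk1
  -- `c ≥ 1`
  have hc1 : (1 : ℝ) ≤ c := by
    have hlog2 : Real.log 2 ≤ L := by
      rw [hL]; exact Real.log_le_log (by norm_num) hNR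
    have h2 : (0.6931471803 : ℝ) < Real.log 2 := Real.log_two_gt_d9
    rw [hc, le_div_iff₀ hε0, one_mul]
    nlinarith
  have hTm1 : ((T.card : ℝ) + 1) ≤ 3 * c := by
    have h1 : (T.card : ℝ) ≤ (m : ℝ) := by exact_mod_cast hTm
    have h2 : (m : ℝ) < c + 1 := Nat.ceil_lt_add_one hc0.le
    linarith
  have hk2 : ((k : ℝ) + 1) ≤ 2 ^ k := by
    exact_mod_cast (Nat.lt_two_pow_self (n := k))
  -- main chain
  set a : ℝ := 1 / (2 * k) with ha
  have hkne : (k : ℝ) ≠ 0 := by positivity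
  have ha0 : 0 < a := by positivity
  have hra : 0 < r ^ a := Real.rpow_pos_of_pos hr0 a
  have hLa : L ≤ 2 * k * r ^ a := by
    have h1 : Real.log (r ^ a) = a * L := by rw [Real.log_rpow hr0, hL]
    have h2 : Real.log (r ^ a) ≤ r ^ a := by
      have := Real.log_le_sub_one_of_pos hra
      linarith
    have h3 : L = 2 * k * (a * L) := by
      rw [ha]; field_simp
    rw [h3, h1] at *
    nlinarith [h2, hkR]
  have hB0 : (0 : ℝ) < (24 * k / ε) ^ k := by positivity
  have hchain : r ≤ (24 * k / ε) ^ k * r ^ (1/2 : ℝ) := by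
    have step1 : r ≤ ((k : ℝ) + 1) * (3 * c) ^ k := by
      have h1 : (r : ℝ) ≤ ((k : ℝ) + 1) * ((T.card : ℝ) + 1) ^ k := by
        have := hsauer
        calc r = (H.card : ℝ) := hr
          _ ≤ (((k + 1) * (T.card + 1) ^ k : ℕ) : ℝ) := by exact_mod_cast this
          _ = ((k : ℝ) + 1) * ((T.card : ℝ) + 1) ^ k := by push_cast; ring
      have h2 : ((T.card : ℝ) + 1) ^ k ≤ (3 * c) ^ k :=
        pow_le_pow_left₀ (by positivity) hTm1 k
      nlinarith [pow_nonneg (show (0:ℝ) ≤ (T.card : ℝ) + 1 by positivity) k]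
    have step2 : ((k : ℝ) + 1) * (3 * c) ^ k ≤ (6 * c) ^ k := by
      have h1 : (6 * c) ^ k = 2 ^ k * (3 * c) ^ k := by
        rw [← mul_pow]; ring_nf
      rw [h1]
      exact mul_le_mul_of_nonneg_right hk2 (pow_nonneg (by positivity) k)
    have step3 : (6 * c) ^ k ≤ (24 * k / ε) ^ k * r ^ (1/2 : ℝ) := by
      have h1 : 6 * c ≤ 24 * k * r ^ a / ε := by
        rw [hc, show (6 : ℝ) * (2 * L / ε) = 12 * L / ε by ring,
          div_le_div_iff₀ hε0 hε0]
        have h12 : 12 * L ≤ 24 * (k : ℝ) * r ^ a := by linarith [hLa]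
        exact mul_le_mul_of_nonneg_right h12 hε0.le
      have h2 : (6 * c) ^ k ≤ (24 * k * r ^ a / ε) ^ k :=
        pow_le_pow_left₀ (by positivity) h1 k
      have h3 : (24 * k * r ^ a / ε) ^ k = (24 * k / ε) ^ k * (r ^ a) ^ k := by
        rw [show 24 * (k : ℝ) * r ^ a / ε = (24 * k / ε) * (r ^ a) by ring, mul_pow]
      have h4 : (r ^ a) ^ k = r ^ (1/2 : ℝ) := by
        rw [← Real.rpow_natCast (r ^ a) k, ← Real.rpow_mul hr0.le]
        congr 1
        rw [ha]
        field_simp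
      rw [h3, h4] at h2
      exact h2
    linarith
  have hhalf : r ^ (1/2 : ℝ) * r ^ (1/2 : ℝ) = r := by
    rw [← Real.rpow_add hr0]
    norm_num
  have hrhalf : 0 < r ^ (1/2 : ℝ) := Real.rpow_pos_of_pos hr0 _
  have hfin : r ^ (1/2 : ℝ) ≤ (24 * k / ε) ^ k := by
    have h : r ^ (1/2 : ℝ) * r ^ (1/2 : ℝ) ≤ (24 * k / ε) ^ k * r ^ (1/2 : ℝ) := by
      rw [hhalf]; exact hchain
    exact le_of_mul_le_mul_right h hrhalf
  have hfin2 : r ≤ ((24 * k / ε) ^ k) ^ 2 := by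
    calc r = r ^ (1/2 : ℝ) * r ^ (1/2 : ℝ) := hhalf.symm
      _ ≤ (24 * k / ε) ^ k * (24 * k / ε) ^ k :=
          mul_le_mul hfin hfin hrhalf.le hB0.le
      _ = ((24 * k / ε) ^ k) ^ 2 := by ring
  have hfin3 : ((24 * k / ε) ^ k) ^ 2 = (24 * k : ℝ) ^ (2 * k) / ε ^ (2 * k) := by
    rw [← pow_mul, div_pow, mul_comm k 2]
  have hfin4 : (24 * k : ℝ) ^ (2 * k) / ε ^ (2 * k)
      ≤ (80 * k : ℝ) ^ (10 * k) / ε ^ (20 * k) := by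
    refine div_le_div₀ (by positivity) ?_ (by positivity) ?_
    · calc (24 * k : ℝ) ^ (2 * k) ≤ (80 * k : ℝ) ^ (2 * k) :=
          pow_le_pow_left₀ (by positivity) (by nlinarith) _
        _ ≤ (80 * k : ℝ) ^ (10 * k) :=
          pow_le_pow_right₀ (by nlinarith) (by omega)
    · exact pow_le_pow_of_le_one hε0.le hε1.le (by omega)
  calc (H.card : ℝ) = r := hr
    _ ≤ ((24 * k / ε) ^ k) ^ 2 := hfin2
    _ = (24 * k : ℝ) ^ (2 * k) / ε ^ (2 * k) := hfin3
    _ ≤ _ := hfin4
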